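/- The complexification of ψ₅ is not simple: the subspace of ℂ² spanned by e₁ + i·e₂ is a nontrivial proper ideal of the complex algebra defined by e₁∘e₁ = e₁, e₂∘e₂ = −e₁, e₁∘e₂ = e₂, even though the real algebra ψ₅ is simple. -/

import Mathlib

/-- ψ₅ over ℂ : e₁∘e₁ = e₁, e₂∘e₂ = −e₁, e₁∘e₂ = e₂. -/
def psi5C (x y : ℂ × ℂ) : ℂ × ℂ := (x.1 * y.1 - x.2 * y.2, x.1 * y.2 + x.2 * y.1)

/-- ψ₅ over ℝ. -/
def psi5 (x y : ℝ × ℝ) : ℝ × ℝ := (x.1 * y.1 - x.2 * y.2, x.1 * y.2 + x.2 * y.1)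

theorem stmt_6 :
    (∀ v ∈ Submodule.span ℂ {((1 : ℂ), Complex.I)}, ∀ w : ℂ × ℂ,
        psi5C v w ∈ Submodule.span ℂ {((1 : ℂ), Complex.I)}) ∧
    Submodule.span ℂ {((1 : ℂ), Complex.I)} ≠ (⊥ : Submodule ℂ (ℂ × ℂ)) ∧
    Submodule.span ℂ {((1 : ℂ), Complex.I)} ≠ (⊤ : Submodule ℂ (ℂ × ℂ)) ∧
    (∀ I : Submodule ℝ (ℝ × ℝ), (∀ v ∈ I, ∀ w : ℝ × ℝ, psi5 v w ∈ I) →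
      I = ⊥ ∨ I = ⊤) := by
  refine ⟨?_, ?_, ?_, ?_⟩
  · intro v hv w
    rw [Submodule.mem_span_singleton] at hv ⊢
    obtain ⟨c, rfl⟩ := hv
    refine ⟨c * (w.1 - Complex.I * w.2), ?_⟩
    simp only [psi5C, Prod.smul_mk, smul_eq_mul, Prod.mk.injEq]
    constructor
    · ring
    · linear_combination (-c * w.2) * Complex.I_sq
  · intro h
    have : ((1 : ℂ), Complex.I) ∈ Submodule.span ℂ {((1 : ℂ), Complex.I)} :=
      Submodule.mem_span_singleton_self _
    rw [h, Submodule.mem_bot, Prod.mk.injEq] at this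
    exact one_ne_zero this.1
  · intro h
    have : ((1 : ℂ), (0 : ℂ)) ∈ Submodule.span ℂ {((1 : ℂ), Complex.I)} := by
      rw [h]; trivial
    rw [Submodule.mem_span_singleton] at this
    obtain ⟨c, hc⟩ := this
    simp only [Prod.smul_mk, smul_eq_mul, Prod.mk.injEq, mul_one] at hc
    have := hc.2
    rw [hc.1, one_mul] at this
    exact Complex.I_ne_zero this
  · intro I hI
    by_cases hb : I = ⊥
    · exact Or.inl hb
    · right
      obtain ⟨v, hv, hv0⟩ := Submodule.exists_mem_ne_zero_of_ne_bot hb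
      have hd : v.1 * v.1 + v.2 * v.2 ≠ 0 := by
        intro h
        apply hv0
        have h1 : v.1 = 0 := by nlinarith [sq_nonneg v.1, sq_nonneg v.2]
        have h2 : v.2 = 0 := by nlinarith [sq_nonneg v.1, sq_nonneg v.2]
        exact Prod.ext h1 h2
      rw [eq_top_iff]
      intro w _
      have h := hI v hv ((v.1 * w.1 + v.2 * w.2) / (v.1 * v.1 + v.2 * v.2),
        (v.1 * w.2 - v.2 * w.1) / (v.1 * v.1 + v.2 * v.2))
      have heq : psi5 v ((v.1 * w.1 + v.2 * w.2) / (v.1 * v.1 + v.2 * v.2),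
          (v.1 * w.2 - v.2 * w.1) / (v.1 * v.1 + v.2 * v.2)) = w := by
        simp only [psi5]
        refine Prod.ext ?_ ?_ <;> field_simp [show v.1 ^ 2 + v.2 ^ 2 ≠ 0 by simpa [sq] using hd] <;> ring
      rwa [heq] at h
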